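/- Derivative of a B-spline: for every order k ≥ 2, every j ∈ ℤ and every x ∈ ℝ that is not a knot (x ≠ t_i for all i ∈ ℤ), the function B_{j,k} is differentiable at x with derivative D B_{j,k}(x) = (k − 1) · ( B_{j,k−1}(x)/(t_{j+k−1} − t_j) − B_{j+1,k−1}(x)/(t_{j+k} − t_{j+1}) ). -/

import Mathlib

/-- B-splines of order `k ≥ 1` with knot sequence `t`, defined by the Cox–de Boor recursion:
`B_{j,1}(x) = 1` if `t j ≤ x < t (j+1)` and `0` otherwise; and for `k ≥ 2`,
`B_{j,k}(x) = ((x − t_j)/(t_{j+k−1} − t_j)) B_{j,k−1}(x)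
            + ((t_{j+k} − x)/(t_{j+k} − t_{j+1})) B_{j+1,k−1}(x)`.
(The value for order `0` is irrelevant and set to `0`.) -/
noncomputable def bspline (t : ℤ → ℝ) : ℕ → ℤ → ℝ → ℝ
  | 0, _, _ => 0
  | 1, j, x => if t j ≤ x ∧ x < t (j + 1) then 1 else 0
  | (k + 2), j, x =>
      ((x - t j) / (t (j + (k : ℤ) + 1) - t j)) * bspline t (k + 1) j x +
      ((t (j + (k : ℤ) + 2) - x) / (t (j + (k : ℤ) + 2) - t (j + 1))) *
        bspline t (k + 1) (j + 1) x

/-- An order-1 B-spline is locally constant away from the knots. -/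
lemma bspline_one_eventuallyEq (t : ℤ → ℝ) (x : ℝ) (hx : ∀ i : ℤ, x ≠ t i) (j : ℤ) :
    (fun y => bspline t 1 j y) =ᶠ[nhds x] fun _ => bspline t 1 j x := by
  by_cases h : t j ≤ x ∧ x < t (j + 1)
  · have h1 : t j < x := lt_of_le_of_ne h.1 (hx j).symm
    filter_upwards [Ioo_mem_nhds h1 h.2] with y hy
    simp [bspline, h, hy.1.le, hy.2]
  · rw [not_and_or, not_le, not_lt] at h
    rcases h with h | h
    · filter_upwards [Iio_mem_nhds h] with y hy
      simp [bspline, not_le.mpr h, not_le.mpr (Set.mem_Iio.mp hy)]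
    · have h1 : t (j + 1) < x := lt_of_le_of_ne h (hx (j + 1)).symm
      filter_upwards [Ioi_mem_nhds h1] with y hy
      simp [bspline, not_lt.mpr h, not_lt.mpr (le_of_lt (Set.mem_Ioi.mp hy))]

lemma bspline_hasDerivAt_aux (t : ℤ → ℝ) (ht : StrictMono t) (x : ℝ)
    (hx : ∀ i : ℤ, x ≠ t i) :
    ∀ (k : ℕ) (j : ℤ),
    HasDerivAt (fun y => bspline t k j y)
      (((k : ℝ) - 1) *
        (bspline t (k - 1) j x / (t (j + (k : ℤ) - 1) - t j) -
         bspline t (k - 1) (j + 1) x / (t (j + (k : ℤ)) - t (j + 1)))) x := by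
  have hne : ∀ a b : ℤ, a < b → t b - t a ≠ 0 := fun a b h => sub_ne_zero.mpr (ht h).ne'
  intro k
  induction k using Nat.twoStepInduction with
  | zero =>
    intro j
    simpa [bspline] using hasDerivAt_const x (0 : ℝ)
  | one =>
    intro j
    have h := (hasDerivAt_const x (bspline t 1 j x)).congr_of_eventuallyEq
      (bspline_one_eventuallyEq t x hx j)
    refine h.congr_deriv ?_
    norm_num
  | more k ih1 ih0 =>
    intro j
    have h1 : HasDerivAt (fun y => (y - t j) / (t (j + (k : ℤ) + 1) - t j))
        (1 / (t (j + (k : ℤ) + 1) - t j)) x := by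
      simpa using ((hasDerivAt_id x).sub_const (t j)).div_const (t (j + (k : ℤ) + 1) - t j)
    have h2 : HasDerivAt
        (fun y => (t (j + (k : ℤ) + 2) - y) / (t (j + (k : ℤ) + 2) - t (j + 1)))
        (-1 / (t (j + (k : ℤ) + 2) - t (j + 1))) x := by
      simpa using ((hasDerivAt_const x (t (j + (k : ℤ) + 2))).sub
        (hasDerivAt_id x)).div_const (t (j + (k : ℤ) + 2) - t (j + 1))
    have hB := ih0 j
    have hC := ih0 (j + 1)
    have h := (h1.mul hB).add (h2.mul hC)
    have hfun : (fun y => bspline t (k + 2) j y) =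
        fun y => (y - t j) / (t (j + (k : ℤ) + 1) - t j) * bspline t (k + 1) j y +
          (t (j + (k : ℤ) + 2) - y) / (t (j + (k : ℤ) + 2) - t (j + 1)) *
            bspline t (k + 1) (j + 1) y := by
      funext y; simp [bspline]
    rw [hfun]
    refine h.congr_deriv ?_
    rcases k with _ | m
    · norm_num [bspline]
      rw [show (j:ℤ) + 2 - 1 = j + 1 from by ring, show (j:ℤ) + 1 + 1 = j + 2 from by ring]
      have d1 : t (j + 1) - t j ≠ 0 := hne _ _ (by omega)
      have d2 : t (j + 2) - t (j + 1) ≠ 0 := hne _ _ (by omega)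
      split_ifs <;> (field_simp; try ring)
    · have e1 : m + 1 + 2 - 1 = m + 2 := rfl
      have e2 : m + 1 + 1 - 1 = m + 1 := rfl
      have e3 : m + 1 + 1 = m + 2 := rfl
      simp only [e1, e2, e3, bspline]
      push_cast
      rw [show (j:ℤ) + 1 + 1 = j + 2 from by ring,
        show j + ((m:ℤ) + 1 + 2) - 1 = j + m + 2 from by ring,
        show j + ((m:ℤ) + 1 + 2) = j + m + 3 from by ring,
        show j + 1 + (m:ℤ) + 1 = j + m + 2 from by ring,
        show j + 1 + (m:ℤ) + 2 = j + m + 3 from by ring,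
        show j + ((m:ℤ) + 1) + 1 = j + m + 2 from by ring,
        show j + ((m:ℤ) + 2) - 1 = j + m + 1 from by ring,
        show j + ((m:ℤ) + 2) = j + m + 2 from by ring,
        show j + ((m:ℤ) + 1) + 2 = j + m + 3 from by ring,
        show j + 1 + ((m:ℤ) + 2) - 1 = j + m + 2 from by ring,
        show j + 1 + ((m:ℤ) + 2) = j + m + 3 from by ring]
      have d1 : t (j + (m:ℤ) + 1) - t j ≠ 0 := hne _ _ (by omega)
      have d2 : t (j + (m:ℤ) + 2) - t j ≠ 0 := hne _ _ (by omega)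
      have d3 : t (j + (m:ℤ) + 2) - t (j + 1) ≠ 0 := hne _ _ (by omega)
      have d4 : t (j + (m:ℤ) + 3) - t (j + 1) ≠ 0 := hne _ _ (by omega)
      have d5 : t (j + (m:ℤ) + 3) - t (j + 2) ≠ 0 := hne _ _ (by omega)
      field_simp
      ring

/-- Derivative of a B-spline: for every order `k ≥ 2` and every `x` that is not a knot,
`B_{j,k}` is differentiable at `x` with derivative
`(k − 1) (B_{j,k−1}(x)/(t_{j+k−1} − t_j) − B_{j+1,k−1}(x)/(t_{j+k} − t_{j+1}))`. -/
theorem bspline_hasDerivAt (t : ℤ → ℝ) (ht : StrictMono t) (k : ℕ) (hk : 2 ≤ k)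
    (j : ℤ) (x : ℝ) (hx : ∀ i : ℤ, x ≠ t i) :
    HasDerivAt (fun y => bspline t k j y)
      (((k : ℝ) - 1) *
        (bspline t (k - 1) j x / (t (j + (k : ℤ) - 1) - t j) -
         bspline t (k - 1) (j + 1) x / (t (j + (k : ℤ)) - t (j + 1)))) x := by
  exact bspline_hasDerivAt_aux t ht x hx k j
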